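/- arXiv:1311.0706 — 2 statements merged into one kernel-verified Lean document; each statement's English description precedes it below -/
import Mathlib

section
/- Let m, n, p be positive integers. Then, as real numbers, the double sum ∑_{l=0}^{m} ∑_{k=0}^{n} C(m,l) · C(n,k) · n^{m-l-1} · m^{n-k-1} · (km + nl - kl) · p^{l+k-1} equals (m+p)^{n-1} · (n+p)^{m-1} · (m+n+p), where the exponents m-l-1, n-k-1 and l+k-1 are integer exponents (possibly equal to -1) and C(a,b) denotes the binomial coefficient. -/
open Finset

lemma binom_aux (x y : ℝ) (n : ℕ) :
    ∑ k ∈ range (n + 1), (n.choose k : ℝ) * x ^ (n - k) * y ^ k = (x + y) ^ n := by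
  rw [add_comm x y, add_pow]
  refine Finset.sum_congr rfl fun k hk => ?_
  ring

lemma binom_deriv (x y : ℝ) (n : ℕ) :
    ∑ k ∈ range (n + 1), (n.choose k : ℝ) * k * x ^ (n - k) * y ^ k
      = n * y * (x + y) ^ (n - 1) := by
  cases n with
  | zero => simp
  | succ n =>
    rw [Finset.sum_range_succ']
    simp only [Nat.cast_zero, mul_zero, zero_mul, pow_zero, add_zero, Nat.succ_sub_one]
    have h : ∀ k ∈ range (n + 1),
        ((n+1).choose (k+1) : ℝ) * ((k+1 : ℕ) : ℝ) * x ^ (n + 1 - (k+1)) * y ^ (k+1)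
          = (((n:ℝ)+1) * y) * ((n.choose k : ℝ) * x ^ (n - k) * y ^ k) := by
      intro k hk
      have hc : ((n+1).choose (k+1) : ℝ) * ((k+1 : ℕ) : ℝ) = ((n:ℝ)+1) * (n.choose k : ℝ) := by
        exact_mod_cast congrArg (Nat.cast : ℕ → ℝ) (Nat.add_one_mul_choose_eq n k).symm
      have hs : n + 1 - (k + 1) = n - k := by omega
      rw [hs, pow_succ]
      calc ((n+1).choose (k+1) : ℝ) * ((k+1 : ℕ) : ℝ) * x ^ (n-k) * (y ^ k * y)
          = (((n+1).choose (k+1) : ℝ) * ((k+1 : ℕ) : ℝ)) * (x ^ (n-k) * y ^ k * y) := by ring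
        _ = (((n:ℝ)+1) * (n.choose k : ℝ)) * (x ^ (n-k) * y ^ k * y) := by rw [hc]
        _ = (((n:ℝ)+1) * y) * ((n.choose k : ℝ) * x ^ (n-k) * y ^ k) := by ring
    rw [Finset.sum_congr rfl h, ← Finset.mul_sum, binom_aux]
    push_cast
    ring

lemma binom_deriv' (x y : ℝ) (n : ℕ) :
    ∑ k ∈ range (n + 1), (n.choose k : ℝ) * ((n : ℝ) - k) * x ^ (n - k) * y ^ k
      = n * x * (x + y) ^ (n - 1) := by
  have h1 := binom_aux x y n
  have h2 := binom_deriv x y n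
  have : ∑ k ∈ range (n + 1), (n.choose k : ℝ) * ((n : ℝ) - k) * x ^ (n - k) * y ^ k
      = (n : ℝ) * ((x + y) ^ n) - n * y * (x + y) ^ (n - 1) := by
    rw [← h1, ← h2, Finset.mul_sum, ← Finset.sum_sub_distrib]
    refine Finset.sum_congr rfl fun k hk => ?_
    ring
  rw [this]
  cases n with
  | zero => simp
  | succ n =>
    simp only [Nat.succ_sub_one]
    rw [pow_succ]
    ring

lemma main_nat (m n p : ℕ) (hn : 0 < n) :
    ∑ l ∈ range (m + 1), ∑ k ∈ range (n + 1),
        (m.choose l : ℝ) * (n.choose k : ℝ) * (n : ℝ) ^ (m - l) * (m : ℝ) ^ (n - k) *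
          ((k : ℝ) * m + (n : ℝ) * l - (k : ℝ) * l) * (p : ℝ) ^ (l + k)
      = (m : ℝ) * n * p * ((m : ℝ) + p) ^ (n - 1) * ((n : ℝ) + p) ^ (m - 1) *
          ((m : ℝ) + n + p) := by
  have split : ∀ l ∈ range (m + 1), ∀ k ∈ range (n + 1),
      (m.choose l : ℝ) * (n.choose k : ℝ) * (n : ℝ) ^ (m - l) * (m : ℝ) ^ (n - k) *
          ((k : ℝ) * m + (n : ℝ) * l - (k : ℝ) * l) * (p : ℝ) ^ (l + k)
        = ((m.choose l : ℝ) * ((m : ℝ) - l) * (n : ℝ) ^ (m - l) * (p : ℝ) ^ l) *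
            ((n.choose k : ℝ) * k * (m : ℝ) ^ (n - k) * (p : ℝ) ^ k)
          + ((m.choose l : ℝ) * l * (n : ℝ) ^ (m - l) * (p : ℝ) ^ l) *
            ((n : ℝ) * ((n.choose k : ℝ) * (m : ℝ) ^ (n - k) * (p : ℝ) ^ k)) := by
    intro l _ k _
    rw [pow_add]
    ring
  calc ∑ l ∈ range (m + 1), ∑ k ∈ range (n + 1),
        (m.choose l : ℝ) * (n.choose k : ℝ) * (n : ℝ) ^ (m - l) * (m : ℝ) ^ (n - k) *
          ((k : ℝ) * m + (n : ℝ) * l - (k : ℝ) * l) * (p : ℝ) ^ (l + k)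
      = (∑ l ∈ range (m + 1), (m.choose l : ℝ) * ((m : ℝ) - l) * (n : ℝ) ^ (m - l) * (p : ℝ) ^ l) *
          (∑ k ∈ range (n + 1), (n.choose k : ℝ) * k * (m : ℝ) ^ (n - k) * (p : ℝ) ^ k)
        + (∑ l ∈ range (m + 1), (m.choose l : ℝ) * l * (n : ℝ) ^ (m - l) * (p : ℝ) ^ l) *
          (∑ k ∈ range (n + 1), (n : ℝ) * ((n.choose k : ℝ) * (m : ℝ) ^ (n - k) * (p : ℝ) ^ k)) := by
        rw [Finset.sum_mul_sum, Finset.sum_mul_sum]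
        rw [← Finset.sum_add_distrib]
        refine Finset.sum_congr rfl fun l hl => ?_
        rw [← Finset.sum_add_distrib]
        exact Finset.sum_congr rfl fun k hk => split l hl k hk
    _ = ((m : ℝ) * n * ((n : ℝ) + p) ^ (m - 1)) * ((n : ℝ) * p * ((m : ℝ) + p) ^ (n - 1))
        + ((m : ℝ) * p * ((n : ℝ) + p) ^ (m - 1)) * ((n : ℝ) * ((m : ℝ) + p) ^ n) := by
        rw [binom_deriv', binom_deriv, binom_deriv, ← Finset.mul_sum, binom_aux]
    _ = (m : ℝ) * n * p * ((m : ℝ) + p) ^ (n - 1) * ((n : ℝ) + p) ^ (m - 1) *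
          ((m : ℝ) + n + p) := by
        have hpow : ((m : ℝ) + p) ^ n = ((m : ℝ) + p) ^ (n - 1) * ((m : ℝ) + p) := by
          rw [← pow_succ]; congr 1; omega
        rw [hpow]; ring




open Finset in
/-- The double-sum identity, over the reals, used in the enumeration of spanning trees of
the complete tripartite graph `K_{m,n,p}`:
`∑_{l=0}^{m} ∑_{k=0}^{n} C(m,l) C(n,k) n^(m-l-1) m^(n-k-1) (km+nl-kl) p^(l+k-1)
  = (m+p)^(n-1) (n+p)^(m-1) (m+n+p)`. -/
theorem tripartite_double_sum_identity (m n p : ℕ) (hm : 0 < m) (hn : 0 < n) (hp : 0 < p) :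
    ∑ l ∈ range (m + 1), ∑ k ∈ range (n + 1),
        (m.choose l : ℝ) * (n.choose k : ℝ) *
          (n : ℝ) ^ ((m : ℤ) - l - 1) * (m : ℝ) ^ ((n : ℤ) - k - 1) *
          ((k : ℝ) * m + (n : ℝ) * l - (k : ℝ) * l) * (p : ℝ) ^ ((l : ℤ) + k - 1) =
      ((m : ℝ) + p) ^ (n - 1) * ((n : ℝ) + p) ^ (m - 1) * ((m : ℝ) + n + p) := by
  have hm0 : (m : ℝ) ≠ 0 := Nat.cast_ne_zero.2 hm.ne'
  have hn0 : (n : ℝ) ≠ 0 := Nat.cast_ne_zero.2 hn.ne'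
  have hp0 : (p : ℝ) ≠ 0 := Nat.cast_ne_zero.2 hp.ne'
  have step : ∀ l ∈ range (m + 1), ∀ k ∈ range (n + 1),
      (m.choose l : ℝ) * (n.choose k : ℝ) *
          (n : ℝ) ^ ((m : ℤ) - l - 1) * (m : ℝ) ^ ((n : ℤ) - k - 1) *
          ((k : ℝ) * m + (n : ℝ) * l - (k : ℝ) * l) * (p : ℝ) ^ ((l : ℤ) + k - 1)
        = ((m.choose l : ℝ) * (n.choose k : ℝ) * (n : ℝ) ^ (m - l) * (m : ℝ) ^ (n - k) *
            ((k : ℝ) * m + (n : ℝ) * l - (k : ℝ) * l) * (p : ℝ) ^ (l + k)) *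
            ((m : ℝ) * n * p)⁻¹ := by
    intro l hl k hk
    have hl' : l ≤ m := Nat.lt_succ_iff.mp (Finset.mem_range.mp hl)
    have hk' : k ≤ n := Nat.lt_succ_iff.mp (Finset.mem_range.mp hk)
    have e1 : (m : ℤ) - l - 1 = ((m - l : ℕ) : ℤ) - 1 := by omega
    have e2 : (n : ℤ) - k - 1 = ((n - k : ℕ) : ℤ) - 1 := by omega
    have e3 : (l : ℤ) + k - 1 = ((l + k : ℕ) : ℤ) - 1 := by push_cast; ring
    rw [e1, e2, e3, zpow_sub_one₀ hn0, zpow_sub_one₀ hm0, zpow_sub_one₀ hp0,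
      zpow_natCast, zpow_natCast, zpow_natCast]
    ring
  rw [Finset.sum_congr rfl fun l hl => Finset.sum_congr rfl (step l hl)]
  simp only [← Finset.sum_mul]
  rw [main_nat m n p hn]
  field_simp
end

section
/- Let m, n, p be positive integers. Then, as real numbers, the triple sum ∑_{l=0}^{m} ∑_{k=0}^{n} ∑_{r=0}^{p} C(m,l) · C(n,k) · C(p,r) · n^{m-l-1} · m^{n-k-1} · (km + ln - lk) · (m+n)^{p-r} · (r+1) · (p+1)^{l+k-1} equals (m+n+1)^{p-1} · (m+p+1)^{n-1} · (n+p+1)^{m-1} · (m+n+p+1)^2, where the exponents m-l-1, n-k-1 and l+k-1 are integer exponents (possibly equal to -1) and C(a,b) denotes the binomial coefficient. -/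
open Finset

lemma lemA (x y : ℝ) (N : ℕ) :
    ∑ k ∈ range (N + 1), (N.choose k : ℝ) * x ^ k * y ^ (N - k) = (x + y) ^ N := by
  rw [add_pow]
  exact sum_congr rfl fun k _ => by ring

lemma lemB (x y : ℝ) (N : ℕ) :
    ∑ k ∈ range (N + 1 + 1), (k : ℝ) * ((N + 1).choose k : ℝ) * x ^ k * y ^ (N + 1 - k)
      = ((N : ℝ) + 1) * x * (x + y) ^ N := by
  rw [Finset.sum_range_succ']
  have h0 : ((0:ℕ) : ℝ) * ((N + 1).choose 0 : ℝ) * x ^ 0 * y ^ (N + 1 - 0) = 0 := by simp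
  rw [h0, add_zero]
  calc ∑ i ∈ range (N + 1),
        ((i+1 : ℕ) : ℝ) * ((N + 1).choose (i+1) : ℝ) * x ^ (i+1) * y ^ (N + 1 - (i+1))
      = ∑ i ∈ range (N + 1), ((N : ℝ) + 1) * x * ((N.choose i : ℝ) * x ^ i * y ^ (N - i)) := by
        refine sum_congr rfl fun i hi => ?_
        have h : ((i:ℝ)+1) * (((N+1).choose (i+1)):ℝ) = ((N:ℝ)+1) * (N.choose i : ℝ) := by
          have := Nat.add_one_mul_choose_eq N i
          have h2 : ((Nat.succ N * N.choose i : ℕ) : ℝ) = (((N+1).choose (i+1) * (i+1) : ℕ) : ℝ) := by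
            exact_mod_cast congrArg (Nat.cast (R := ℝ)) this
          push_cast at h2
          linarith [h2]
        have hy : N + 1 - (i + 1) = N - i := by omega
        rw [hy]
        push_cast
        linear_combination (x ^ (i+1) * y ^ (N - i)) * h
      _ = ((N : ℝ) + 1) * x * (x + y) ^ N := by
        rw [← Finset.mul_sum, lemA]

lemma zpow_h1 (x : ℝ) (hx : x ≠ 0) {N l : ℕ} (h : l ≤ N) :
    x ^ ((N : ℤ) - l - 1) = x ^ (N - l) / x := by
  have e : (N : ℤ) - l - 1 = ((N - l : ℕ) : ℤ) - 1 := by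
    rw [Nat.cast_sub h]
  rw [e, zpow_sub₀ hx, zpow_natCast, zpow_one]

lemma zpow_h2 (x : ℝ) (hx : x ≠ 0) (l k : ℕ) :
    x ^ ((l : ℤ) + k - 1) = x ^ l * x ^ k / x := by
  have e : (l : ℤ) + k - 1 = ((l + k : ℕ) : ℤ) - 1 := by push_cast; ring
  rw [e, zpow_sub₀ hx, zpow_natCast, zpow_one, pow_add]

lemma doubleSum (x u v α β : ℝ) (A B : ℕ) :
    ∑ l ∈ range (A + 1 + 1), ∑ k ∈ range (B + 1 + 1),
      ((A+1).choose l : ℝ) * x ^ l * u ^ (A + 1 - l) *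
        (((B+1).choose k : ℝ) * x ^ k * v ^ (B + 1 - k)) *
        ((k : ℝ) * α + (l : ℝ) * β - (l : ℝ) * k)
    = α * (x + u) ^ (A + 1) * (((B : ℝ) + 1) * x * (x + v) ^ B)
      + β * (((A : ℝ) + 1) * x * (x + u) ^ A) * (x + v) ^ (B + 1)
      - (((A : ℝ) + 1) * x * (x + u) ^ A) * (((B : ℝ) + 1) * x * (x + v) ^ B) := by
  have hAv := lemA x v (B + 1)
  have hBv := lemB x v B
  have inner : ∀ l : ℕ,
      ∑ k ∈ range (B + 1 + 1),
        ((A+1).choose l : ℝ) * x ^ l * u ^ (A + 1 - l) *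
          (((B+1).choose k : ℝ) * x ^ k * v ^ (B + 1 - k)) *
          ((k : ℝ) * α + (l : ℝ) * β - (l : ℝ) * k)
      = (α * (((B : ℝ) + 1) * x * (x + v) ^ B) + (l : ℝ) * β * (x + v) ^ (B + 1)
          - (l : ℝ) * (((B : ℝ) + 1) * x * (x + v) ^ B)) *
          (((A+1).choose l : ℝ) * x ^ l * u ^ (A + 1 - l)) := by
    intro l
    calc ∑ k ∈ range (B + 1 + 1),
          ((A+1).choose l : ℝ) * x ^ l * u ^ (A + 1 - l) *
            (((B+1).choose k : ℝ) * x ^ k * v ^ (B + 1 - k)) *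
            ((k : ℝ) * α + (l : ℝ) * β - (l : ℝ) * k)
        = ∑ k ∈ range (B + 1 + 1),
            ((α - (l:ℝ)) * (((A+1).choose l : ℝ) * x ^ l * u ^ (A + 1 - l)) *
              ((k : ℝ) * ((B+1).choose k : ℝ) * x ^ k * v ^ (B + 1 - k))
            + ((l:ℝ) * β * (((A+1).choose l : ℝ) * x ^ l * u ^ (A + 1 - l))) *
              (((B+1).choose k : ℝ) * x ^ k * v ^ (B + 1 - k))) := by
          exact sum_congr rfl fun k _ => by ring
      _ = (α - (l:ℝ)) * (((A+1).choose l : ℝ) * x ^ l * u ^ (A + 1 - l)) *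
            (∑ k ∈ range (B + 1 + 1), (k : ℝ) * ((B+1).choose k : ℝ) * x ^ k * v ^ (B + 1 - k))
          + ((l:ℝ) * β * (((A+1).choose l : ℝ) * x ^ l * u ^ (A + 1 - l))) *
            (∑ k ∈ range (B + 1 + 1), ((B+1).choose k : ℝ) * x ^ k * v ^ (B + 1 - k)) := by
          rw [sum_add_distrib, Finset.mul_sum, Finset.mul_sum]
      _ = _ := by rw [hBv, hAv]; ring
  calc ∑ l ∈ range (A + 1 + 1), ∑ k ∈ range (B + 1 + 1),
        ((A+1).choose l : ℝ) * x ^ l * u ^ (A + 1 - l) *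
          (((B+1).choose k : ℝ) * x ^ k * v ^ (B + 1 - k)) *
          ((k : ℝ) * α + (l : ℝ) * β - (l : ℝ) * k)
      = ∑ l ∈ range (A + 1 + 1),
          ((α * (((B : ℝ) + 1) * x * (x + v) ^ B)) *
            (((A+1).choose l : ℝ) * x ^ l * u ^ (A + 1 - l))
          + (β * (x + v) ^ (B + 1) - (((B : ℝ) + 1) * x * (x + v) ^ B)) *
            ((l : ℝ) * ((A+1).choose l : ℝ) * x ^ l * u ^ (A + 1 - l))) := by
        exact sum_congr rfl fun l _ => by rw [inner l]; ring
    _ = (α * (((B : ℝ) + 1) * x * (x + v) ^ B)) *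
          (∑ l ∈ range (A + 1 + 1), ((A+1).choose l : ℝ) * x ^ l * u ^ (A + 1 - l))
        + (β * (x + v) ^ (B + 1) - (((B : ℝ) + 1) * x * (x + v) ^ B)) *
          (∑ l ∈ range (A + 1 + 1), (l : ℝ) * ((A+1).choose l : ℝ) * x ^ l * u ^ (A + 1 - l)) := by
        rw [sum_add_distrib, Finset.mul_sum, Finset.mul_sum]
    _ = _ := by rw [lemA, lemB]; ring

open Finset in
/-- The triple-sum identity, over the reals, used in the enumeration of all rooted
spanning forests of the complete tripartite graph `K_{m,n,p}`:
`∑_{l=0}^{m} ∑_{k=0}^{n} ∑_{r=0}^{p} C(m,l) C(n,k) C(p,r) n^(m-l-1) m^(n-k-1) (km+ln-lk)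
    (m+n)^(p-r) (r+1) (p+1)^(l+k-1)
  = (m+n+1)^(p-1) (m+p+1)^(n-1) (n+p+1)^(m-1) (m+n+p+1)^2`. -/
theorem tripartite_triple_sum_identity (m n p : ℕ) (hm : 0 < m) (hn : 0 < n) (hp : 0 < p) :
    ∑ l ∈ range (m + 1), ∑ k ∈ range (n + 1), ∑ r ∈ range (p + 1),
        (m.choose l : ℝ) * (n.choose k : ℝ) * (p.choose r : ℝ) *
          (n : ℝ) ^ ((m : ℤ) - l - 1) * (m : ℝ) ^ ((n : ℤ) - k - 1) *
          ((k : ℝ) * m + (l : ℝ) * n - (l : ℝ) * k) *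
          ((m : ℝ) + n) ^ (p - r) * ((r : ℝ) + 1) * ((p : ℝ) + 1) ^ ((l : ℤ) + k - 1) =
      ((m : ℝ) + n + 1) ^ (p - 1) * ((m : ℝ) + p + 1) ^ (n - 1) *
        ((n : ℝ) + p + 1) ^ (m - 1) * ((m : ℝ) + n + p + 1) ^ 2 := by
  obtain ⟨a, rfl⟩ := Nat.exists_eq_succ_of_ne_zero hm.ne'
  obtain ⟨b, rfl⟩ := Nat.exists_eq_succ_of_ne_zero hn.ne'
  obtain ⟨c, rfl⟩ := Nat.exists_eq_succ_of_ne_zero hp.ne'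
  have hu : ((b+1 : ℕ) : ℝ) ≠ 0 := by positivity
  have hv : ((a+1 : ℕ) : ℝ) ≠ 0 := by positivity
  have hx : ((c+1 : ℕ) : ℝ) + 1 ≠ 0 := by positivity
  set U : ℝ := ((b+1 : ℕ) : ℝ) with hU
  set V : ℝ := ((a+1 : ℕ) : ℝ) with hV
  set X : ℝ := ((c+1 : ℕ) : ℝ) + 1 with hX
  have SR : ∑ r ∈ range (c + 1 + 1),
      ((c+1).choose r : ℝ) * (V + U) ^ (c + 1 - r) * ((r : ℝ) + 1)
      = (1 + (V + U)) ^ (c + 1) + ((c : ℝ) + 1) * 1 * (1 + (V + U)) ^ c := by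
    calc ∑ r ∈ range (c + 1 + 1),
          ((c+1).choose r : ℝ) * (V + U) ^ (c + 1 - r) * ((r : ℝ) + 1)
        = ∑ r ∈ range (c + 1 + 1),
            (((c+1).choose r : ℝ) * (1:ℝ) ^ r * (V + U) ^ (c + 1 - r)
             + (r : ℝ) * ((c+1).choose r : ℝ) * (1:ℝ) ^ r * (V + U) ^ (c + 1 - r)) := by
          exact sum_congr rfl fun r _ => by ring
      _ = (1 + (V + U)) ^ (c + 1) + ((c : ℝ) + 1) * 1 * (1 + (V + U)) ^ c := by
          rw [sum_add_distrib, lemA 1 (V + U) (c+1), lemB 1 (V + U) c]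
  trans ((1 + (V + U)) ^ c * (X + V) ^ b * (X + U) ^ a * (V + U + X) ^ 2)
  · calc ∑ l ∈ range (a + 1 + 1), ∑ k ∈ range (b + 1 + 1), ∑ r ∈ range (c + 1 + 1),
          ((a+1).choose l : ℝ) * ((b+1).choose k : ℝ) * ((c+1).choose r : ℝ) *
            U ^ (((a+1 : ℕ) : ℤ) - l - 1) * V ^ (((b+1 : ℕ) : ℤ) - k - 1) *
            ((k : ℝ) * V + (l : ℝ) * U - (l : ℝ) * k) *
            (V + U) ^ (c + 1 - r) * ((r : ℝ) + 1) * X ^ ((l : ℤ) + k - 1)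
        = ∑ l ∈ range (a + 1 + 1), ∑ k ∈ range (b + 1 + 1),
            (((a+1).choose l : ℝ) * X ^ l * U ^ (a + 1 - l) *
              (((b+1).choose k : ℝ) * X ^ k * V ^ (b + 1 - k)) *
              ((k : ℝ) * V + (l : ℝ) * U - (l : ℝ) * k)) *
            ((∑ r ∈ range (c + 1 + 1),
              ((c+1).choose r : ℝ) * (V + U) ^ (c + 1 - r) * ((r : ℝ) + 1)) * (U * V * X)⁻¹) := by
          refine sum_congr rfl fun l hl => sum_congr rfl fun k hk => ?_
          have hl' : l ≤ a + 1 := Nat.lt_succ_iff.mp (mem_range.mp hl)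
          have hk' : k ≤ b + 1 := Nat.lt_succ_iff.mp (mem_range.mp hk)
          calc ∑ r ∈ range (c + 1 + 1),
                ((a+1).choose l : ℝ) * ((b+1).choose k : ℝ) * ((c+1).choose r : ℝ) *
                  U ^ (((a+1 : ℕ) : ℤ) - l - 1) * V ^ (((b+1 : ℕ) : ℤ) - k - 1) *
                  ((k : ℝ) * V + (l : ℝ) * U - (l : ℝ) * k) *
                  (V + U) ^ (c + 1 - r) * ((r : ℝ) + 1) * X ^ ((l : ℤ) + k - 1)
              = ∑ r ∈ range (c + 1 + 1),
                  (((a+1).choose l : ℝ) * X ^ l * U ^ (a + 1 - l) *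
                    (((b+1).choose k : ℝ) * X ^ k * V ^ (b + 1 - k)) *
                    ((k : ℝ) * V + (l : ℝ) * U - (l : ℝ) * k) * (U * V * X)⁻¹) *
                  (((c+1).choose r : ℝ) * (V + U) ^ (c + 1 - r) * ((r : ℝ) + 1)) := by
                refine sum_congr rfl fun r _ => ?_
                rw [zpow_h1 U hu hl', zpow_h1 V hv hk', zpow_h2 X hx l k,
                  mul_inv, mul_inv]
                ring
            _ = (((a+1).choose l : ℝ) * X ^ l * U ^ (a + 1 - l) *
                  (((b+1).choose k : ℝ) * X ^ k * V ^ (b + 1 - k)) *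
                  ((k : ℝ) * V + (l : ℝ) * U - (l : ℝ) * k) * (U * V * X)⁻¹) *
                ∑ r ∈ range (c + 1 + 1),
                  ((c+1).choose r : ℝ) * (V + U) ^ (c + 1 - r) * ((r : ℝ) + 1) :=
                (Finset.mul_sum _ _ _).symm
            _ = _ := by ring
      _ = (∑ l ∈ range (a + 1 + 1), ∑ k ∈ range (b + 1 + 1),
            ((a+1).choose l : ℝ) * X ^ l * U ^ (a + 1 - l) *
              (((b+1).choose k : ℝ) * X ^ k * V ^ (b + 1 - k)) *
              ((k : ℝ) * V + (l : ℝ) * U - (l : ℝ) * k)) *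
          ((∑ r ∈ range (c + 1 + 1),
            ((c+1).choose r : ℝ) * (V + U) ^ (c + 1 - r) * ((r : ℝ) + 1)) * (U * V * X)⁻¹) :=
          (sum_congr rfl fun l _ => (Finset.sum_mul _ _ _).symm).trans
            (Finset.sum_mul _ _ _).symm
      _ = (V * (X + U) ^ (a + 1) * (((b : ℝ) + 1) * X * (X + V) ^ b)
            + U * (((a : ℝ) + 1) * X * (X + U) ^ a) * (X + V) ^ (b + 1)
            - (((a : ℝ) + 1) * X * (X + U) ^ a) * (((b : ℝ) + 1) * X * (X + V) ^ b)) *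
          (((1 + (V + U)) ^ (c + 1) + ((c : ℝ) + 1) * 1 * (1 + (V + U)) ^ c) * (U * V * X)⁻¹) := by
          rw [doubleSum X U V V U a b, SR]
      _ = (1 + (V + U)) ^ c * (X + V) ^ b * (X + U) ^ a * (V + U + X) ^ 2 := by
          rw [pow_succ (X + U), pow_succ (X + V), pow_succ (1 + (V + U))]
          simp only [hU, hV, hX]
          push_cast
          field_simp
          ring
  · simp only [hU, hV, hX, Nat.succ_sub_one, Nat.add_sub_cancel]
    push_cast
    ring
end
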